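/- arXiv:2202.08861 — 2 statements merged into one kernel-verified Lean document; each statement's English description precedes it below -/
import Mathlib

section
/- Let T be a triangulated category with coproducts and A a set of objects with ΣA ⊆ A. Then the subcategory Coprod(A) is closed under direct summands: if X ⊕ Y lies in Coprod(A), then X lies in Coprod(A). -/
open CategoryTheory CategoryTheory.Limits CategoryTheory.Pretriangulated

universe v u

variable (C : Type u) [Category.{v} C] [HasZeroObject C] [Preadditive C]
  [HasShift C ℤ] [∀ n : ℤ, (shiftFunctor C n).Additive] [Pretriangulated C]
  [IsTriangulated C] [HasCoproducts.{v} C]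

/-- A class of objects closed under isomorphisms, arbitrary (small) coproducts and extensions. -/
def IsCoprodClosed (S : Set C) : Prop :=
  (∀ ⦃X Y : C⦄, (X ≅ Y) → X ∈ S → Y ∈ S) ∧
  (∀ {ι : Type v} (f : ι → C), (∀ i, f i ∈ S) → (∐ f) ∈ S) ∧
  (∀ T ∈ distTriang C, T.obj₁ ∈ S → T.obj₃ ∈ S → T.obj₂ ∈ S)

/-- `Coprod A`: the smallest subcategory of `C` containing `A` and closed under
arbitrary coproducts and extensions. -/
def Coprod (A : Set C) : Set C := ⋂₀ {S : Set C | A ⊆ S ∧ IsCoprodClosed C S}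

section Aux

variable {C}

lemma subset_coprod (A : Set C) : A ⊆ Coprod C A := fun X hX S hS => hS.1 hX

lemma coprod_isCoprodClosed (A : Set C) : IsCoprodClosed C (Coprod C A) := by
  refine ⟨fun X Y e hX S hS => hS.2.1 e (hX S hS),
    fun f hf S hS => hS.2.2.1 f (fun i => hf i S hS),
    fun T hT h₁ h₃ S hS => hS.2.2.2 T hT (h₁ S hS) (h₃ S hS)⟩

lemma coprod_min {A S : Set C} (h₁ : A ⊆ S) (h₂ : IsCoprodClosed C S) :
    Coprod C A ⊆ S := fun _ hX => hX S ⟨h₁, h₂⟩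

/-- `Coprod A` is closed under the shift `⟦1⟧` provided `ΣA ⊆ A`. -/
lemma coprod_shift {A : Set C} (hA : ∀ X ∈ A, X⟦(1:ℤ)⟧ ∈ A) {X : C}
    (hX : X ∈ Coprod C A) : X⟦(1:ℤ)⟧ ∈ Coprod C A := by
  refine coprod_min (S := {Z : C | Z⟦(1:ℤ)⟧ ∈ Coprod C A}) ?_ ?_ hX
  · exact fun Z hZ => subset_coprod A (hA Z hZ)
  · refine ⟨?_, ?_, ?_⟩
    · intro Z W e hZ
      exact (coprod_isCoprodClosed A).1 ((shiftFunctor C (1:ℤ)).mapIso e) hZ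
    · intro ι f hf
      have h : (∐ fun i => (f i)⟦(1:ℤ)⟧) ∈ Coprod C A :=
        (coprod_isCoprodClosed A).2.1 _ hf
      exact (coprod_isCoprodClosed A).1
        (PreservesCoproduct.iso (shiftFunctor C (1:ℤ)) f).symm h
    · intro T hT h₁ h₃
      exact (coprod_isCoprodClosed A).2.2 _ (Triangle.shift_distinguished T hT 1) h₁ h₃

/-- The components of the peeling isomorphism. -/
@[simp] noncomputable def peelHomComp [HasBinaryBiproducts C] {J : Type v} (g : Option J → C) :
    ∀ o : Option J, g o ⟶ g none ⊞ (∐ fun j => g (some j))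
  | none => biprod.inl
  | some j => Sigma.ι (fun j => g (some j)) j ≫ biprod.inr

/-- Peeling off the `none` factor of a coproduct indexed by `Option J`. -/
noncomputable def peelIso [HasBinaryBiproducts C] {J : Type v} (g : Option J → C) :
    (∐ g) ≅ g none ⊞ (∐ fun j => g (some j)) where
  hom := Sigma.desc (peelHomComp g)
  inv := biprod.desc (Sigma.ι g none) (Sigma.desc (fun j => Sigma.ι g (some j)))
  hom_inv_id := by
    ext o
    rcases o with _ | j <;> simp
  inv_hom_id := by
    apply biprod.hom_ext'
    · simp
    · apply colimit.hom_ext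
      intro ⟨j⟩
      simp

/-- A coproduct of binary biproducts is the binary biproduct of the coproducts. -/
noncomputable def flattenIso [HasBinaryBiproducts C] {J : Type v} (f g : J → C) :
    (∐ fun j => f j ⊞ g j) ≅ (∐ f) ⊞ (∐ g) where
  hom := Sigma.desc fun j => biprod.map (Sigma.ι f j) (Sigma.ι g j)
  inv := biprod.desc (Sigma.desc fun j => biprod.inl ≫ Sigma.ι (fun j => f j ⊞ g j) j)
    (Sigma.desc fun j => biprod.inr ≫ Sigma.ι (fun j => f j ⊞ g j) j)
  hom_inv_id := by
    apply colimit.hom_ext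
    intro ⟨j⟩
    apply biprod.hom_ext'
    · simp
    · simp
  inv_hom_id := by
    apply biprod.hom_ext'
    · apply colimit.hom_ext
      intro ⟨j⟩
      simp
    · apply colimit.hom_ext
      intro ⟨j⟩
      simp

/-- `Option (ULift ℕ) ≃ ULift ℕ`. -/
def optEquiv : Option (ULift.{v} ℕ) ≃ ULift.{v} ℕ where
  toFun o := match o with
    | none => ⟨0⟩
    | some n => ⟨n.down + 1⟩
  invFun n := match n with
    | ⟨0⟩ => none
    | ⟨m+1⟩ => some ⟨m⟩
  left_inv o := by rcases o with _ | ⟨n⟩ <;> rfl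
  right_inv n := by rcases n with ⟨_ | m⟩ <;> rfl

/-- Eilenberg swindle for a constant countable coproduct. -/
noncomputable def peelConst [HasBinaryBiproducts C] (X : C) :
    (∐ fun _ : ULift.{v} ℕ => X) ≅ X ⊞ (∐ fun _ : ULift.{v} ℕ => X) :=
  (Sigma.whiskerEquiv (f := fun _ : ULift.{v} ℕ => X)
    (g := fun _ : Option (ULift.{v} ℕ) => X) optEquiv.symm (fun _ => Iso.refl X)) ≪≫
    peelIso (fun _ : Option (ULift.{v} ℕ) => X)

end Aux

/-- If `ΣA ⊆ A` then `Coprod(A)` is closed under direct summands: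
if `X ⊕ Y ∈ Coprod(A)` then `X ∈ Coprod(A)`. -/
theorem coprod_closed_under_summands [HasBinaryBiproducts C]
    (A : Set C) (hA : ∀ X ∈ A, X⟦(1:ℤ)⟧ ∈ A) (X Y : C) (hXY : (X ⊞ Y) ∈ Coprod C A) :
    X ∈ Coprod C A := by
  -- the Eilenberg swindle object
  set W : C := ∐ (fun _ : ULift.{v} ℕ => X ⊞ Y) with hWdef
  have hW : W ∈ Coprod C A := (coprod_isCoprodClosed A).2.1 _ (fun _ => hXY)
  -- the swindle isomorphism `X ⊞ W ≅ W`
  have hiso : X ⊞ W ≅ W :=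
    (biprod.mapIso (Iso.refl X) (flattenIso (fun _ : ULift.{v} ℕ => X) (fun _ => Y))) ≪≫
    (biprod.associator _ _ _).symm ≪≫
    (biprod.mapIso (peelConst X).symm (Iso.refl _)) ≪≫
    (flattenIso (fun _ : ULift.{v} ℕ => X) (fun _ => Y)).symm
  have hWX : (W ⊞ X) ∈ Coprod C A :=
    (coprod_isCoprodClosed A).1 (hiso.symm ≪≫ biprod.braiding X W) hW
  -- the split triangle `W → W ⊞ X → X → W⟦1⟧`, rotated
  have hT := rot_of_distTriang _ (binaryBiproductTriangle_distinguished (C := C) W X)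
  exact (coprod_isCoprodClosed A).2.2 _ hT hWX (coprod_shift hA hW)
end

section
/- Let T be a triangulated category with coproducts and S ⊆ T a full triangulated subcategory. Suppose (S^{≤0}, S^{≥0}) is a t-structure on S, and suppose that S^{≤0} generates a t-structure on T, meaning that (Coprod(S^{≤0}), Σ Coprod(S^{≤0})^⊥) is a t-structure on T. Then the restriction to S of this generated t-structure equals the original one: S^{≤0} = S ∩ Coprod(S^{≤0}) and S^{≥0} = S ∩ Σ Coprod(S^{≤0})^⊥. -/
open CategoryTheory CategoryTheory.Limits CategoryTheory.Pretriangulated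

universe v u

variable (C : Type u) [Category.{v} C] [HasZeroObject C] [Preadditive C]
  [HasShift C ℤ] [∀ n : ℤ, (shiftFunctor C n).Additive] [Pretriangulated C]
  [IsTriangulated C] [HasCoproducts.{v} C]

/-- The right orthogonal `S^⊥ = {Y | Hom(X, Y) = 0 for all X ∈ S}`. -/
def rightPerp (S : Set C) : Set C := {Y | ∀ X ∈ S, ∀ f : X ⟶ Y, f = 0}

/-- The image `Σ S` of a class of objects under the shift. -/
def shiftSet (S : Set C) : Set C := (fun X => X⟦(1:ℤ)⟧) '' S

/-- `S` is a full triangulated subcategory: closed under isomorphisms, shifts in both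
directions, and extensions. -/
def IsTriangulatedSubcat (S : Set C) : Prop :=
  (∀ ⦃X Y : C⦄, (X ≅ Y) → X ∈ S → Y ∈ S) ∧
  (∀ X ∈ S, X⟦(1:ℤ)⟧ ∈ S) ∧ (∀ X ∈ S, X⟦(-1:ℤ)⟧ ∈ S) ∧
  (∀ T ∈ distTriang C, T.obj₁ ∈ S → T.obj₃ ∈ S → T.obj₂ ∈ S)

/-- `(le, ge)` is a t-structure on the full subcategory `S ⊆ C`, in the sense of
Beilinson–Bernstein–Deligne: `le = S^{≤0}` and `ge = S^{≥0}` are iso-closed classes of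
objects of `S`, with `Σ le ⊆ le`, `Σ⁻¹ ge ⊆ ge`, `Hom(Σ le, ge) = 0`, and every object
of `S` admits a truncation triangle `X⟦1⟧ → E → Y → X⟦2⟧` with `X ∈ le`, `Y ∈ ge`. -/
structure IsTStructureOn (S le ge : Set C) : Prop where
  le_subset : le ⊆ S
  ge_subset : ge ⊆ S
  le_iso : ∀ ⦃X Y : C⦄, (X ≅ Y) → X ∈ le → Y ∈ le
  ge_iso : ∀ ⦃X Y : C⦄, (X ≅ Y) → X ∈ ge → Y ∈ ge
  le_shift : ∀ X ∈ le, X⟦(1:ℤ)⟧ ∈ le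
  ge_shift : ∀ X ∈ ge, X⟦(-1:ℤ)⟧ ∈ ge
  hom_zero : ∀ X ∈ le, ∀ Y ∈ ge, ∀ f : X⟦(1:ℤ)⟧ ⟶ Y, f = 0
  exists_triangle : ∀ E ∈ S, ∃ (X Y : C) (_ : X ∈ le) (_ : Y ∈ ge)
    (f : X⟦(1:ℤ)⟧ ⟶ E) (g : E ⟶ Y) (h : Y ⟶ X⟦(1:ℤ)⟧⟦(1:ℤ)⟧),
    Triangle.mk f g h ∈ distTriang C

/-- Lemma 3.1: if `(le, ge)` is a t-structure on the full triangulated subcategory `S ⊆ C`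
and `le` generates a t-structure `(Coprod(le), (Σ Coprod(le))^⊥)` on `C`, then the
restriction to `S` of the generated t-structure is the original one:
`le = S ∩ Coprod(le)` and `ge = S ∩ (Σ Coprod(le))^⊥`. -/
theorem restriction_of_generated_tStructure (S le ge : Set C)
    (hS : IsTriangulatedSubcat C S) (t : IsTStructureOn C S le ge)
    (hgen : IsTStructureOn C Set.univ (Coprod C le)
      (rightPerp C (shiftSet C (Coprod C le)))) :
    le = S ∩ Coprod C le ∧ ge = S ∩ rightPerp C (shiftSet C (Coprod C le)) := by
  have hle_sub : le ⊆ Coprod C le := fun x hx M hM => hM.1 hx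
  -- key vanishing: Hom(X⟦1⟧, Y) = 0 for X ∈ Coprod le, Y ∈ ge
  have key : ∀ Y ∈ ge, ∀ X ∈ Coprod C le, ∀ f : X⟦(1:ℤ)⟧ ⟶ Y, f = 0 := by
    intro Y hY X hX
    refine hX {Z | ∀ f : Z⟦(1:ℤ)⟧ ⟶ Y, f = 0}
      ⟨fun Z hZ f => t.hom_zero Z hZ Y hY f, ?_, ?_, ?_⟩
    · intro Z W e hZ f
      have h0 : (shiftFunctor C (1:ℤ)).map e.hom ≫ f = 0 := hZ _
      calc f = (shiftFunctor C (1:ℤ)).map e.inv ≫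
            ((shiftFunctor C (1:ℤ)).map e.hom ≫ f) := by
              rw [← Category.assoc, ← Functor.map_comp, e.inv_hom_id,
                CategoryTheory.Functor.map_id, Category.id_comp]
        _ = 0 := by rw [h0, comp_zero]
    · intro ι g hg f
      have hc := isColimitOfPreserves (shiftFunctor C (1:ℤ))
        (colimit.isColimit (Discrete.functor g))
      refine hc.hom_ext (fun j => ?_)
      rw [comp_zero]
      exact hg j.as _
    · intro T hT h1 h3 f
      have hT3 := rot_of_distTriang _ (rot_of_distTriang _ (rot_of_distTriang _ hT))
      obtain ⟨y, hy⟩ := Triangle.yoneda_exact₂ _ hT3 f (h1 _)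
      rw [hy, h3 y]
      exact comp_zero
  constructor
  · apply Set.Subset.antisymm
    · exact fun X hX => ⟨t.le_subset hX, hle_sub hX⟩
    · rintro E ⟨hES, hEL⟩
      obtain ⟨A, B, hA, hB, f, g, h, hT⟩ := t.exists_triangle (E⟦(1:ℤ)⟧) (hS.2.1 E hES)
      have hg : g = 0 := key B hB E hEL g
      obtain ⟨y, hy⟩ := Triangle.yoneda_exact₃ _ hT (𝟙 B) (by simp [hg]; exact zero_comp)
      have hy0 : y = 0 := key B hB (A⟦(1:ℤ)⟧) (hle_sub (t.le_shift A hA)) y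
      have hB0 : IsZero B := by
        rw [IsZero.iff_id_eq_zero, hy, hy0]
        exact comp_zero
      have hiso : IsIso f := (Triangle.isZero₃_iff_isIso₁ _ hT).1 hB0
      exact t.le_iso ((shiftFunctor C (1:ℤ)).preimageIso (asIso f)) hA
  · apply Set.Subset.antisymm
    · rintro Y hY
      refine ⟨t.ge_subset hY, ?_⟩
      rintro Z ⟨X, hX, rfl⟩ f
      exact key Y hY X hX f
    · rintro E ⟨hES, hER⟩
      obtain ⟨A, B, hA, hB, f, g, h, hT⟩ := t.exists_triangle E hES
      have hf : f = 0 := hER (A⟦(1:ℤ)⟧) ⟨A, hle_sub hA, rfl⟩ f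
      obtain ⟨y, hy⟩ := Triangle.coyoneda_exact₂ _ (inv_rot_of_distTriang _ hT)
        (𝟙 (A⟦(1:ℤ)⟧)) (by simp [hf]; exact comp_zero)
      have hy0 : y = 0 := t.hom_zero A hA (B⟦(-1:ℤ)⟧) (t.ge_shift B hB) y
      have hA0 : IsZero (A⟦(1:ℤ)⟧) := by
        rw [IsZero.iff_id_eq_zero, hy, hy0]
        exact zero_comp
      have hiso : IsIso g := (Triangle.isZero₁_iff_isIso₂ _ hT).1 hA0
      exact t.ge_iso (asIso g).symm hB
end
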